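/- Let H be a real Hilbert space and J : H → ℝ ∪ {+∞} be a proper, convex, lower semi-continuous, absolutely one-homogeneous functional satisfying a Poincaré inequality: there exists c_P > 0 with c_P ‖u‖ ≤ J(u) for all u ∈ N(J)^⊥. Let (u^k), (v^k) be generated by the proximal power method u⁰ = f/‖f‖ with f ∈ N(J)^⊥, f ≠ 0, v^k = prox_{α(u^k)}^J(u^k), u^{k+1} = v^k/‖v^k‖, where the parameters satisfy 0 < α(u^k) ≤ c/J(u^k) for a fixed c ∈ (0,1) and α(u^k) < J_*(u^k), and assume sup_k ‖v^k‖ < ∞. Then the nonnegative terms a_k := ‖v^k‖ − ⟨v^k, u^k⟩ are summable: ∑_{k=0}^∞ (‖v^k‖ − ⟨v^k, u^k⟩) < ∞; in particular ‖v^k‖ − ⟨v^k, u^k⟩ → 0 as k → ∞. -/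

import Mathlib

open scoped RealInnerProductSpace

noncomputable section

variable {H : Type*} [NormedAddCommGroup H] [InnerProductSpace ℝ H] [CompleteSpace H]

/-- `J` is absolutely one-homogeneous: `J (c • u) = |c| * J u` for `c ≠ 0`, and `J 0 = 0`. -/
def AbsOneHom (J : H → EReal) : Prop :=
  J 0 = 0 ∧ ∀ c : ℝ, c ≠ 0 → ∀ u : H, J (c • u) = ((|c| : ℝ) : EReal) * J u

/-- Convexity of an extended-real-valued functional. -/
def ConvexFn (J : H → EReal) : Prop :=
  ∀ x y : H, ∀ t : ℝ, 0 ≤ t → t ≤ 1 →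
    J (t • x + (1 - t) • y) ≤ ((t : ℝ) : EReal) * J x + (((1 - t) : ℝ) : EReal) * J y

/-- `J` is proper: it never takes the value `⊥` and is not identically `⊤`. -/
def ProperFn (J : H → EReal) : Prop := (∀ u : H, J u ≠ ⊥) ∧ ∃ u : H, J u ≠ ⊤

/-- `u` is orthogonal to the null space `N(J) = {n : J n = 0}` of `J`. -/
def InNullPerp (J : H → EReal) (u : H) : Prop := ∀ n : H, J n = 0 → ⟪u, n⟫ = 0

/-- The objective `v ↦ ½‖v - u‖² + α J(v)` of the proximal problem for `J`. -/
def ProxObj (J : H → EReal) (α : ℝ) (u v : H) : EReal :=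
  (((2 : ℝ)⁻¹ * ‖v - u‖ ^ 2 : ℝ) : EReal) + (α : EReal) * J v

/-- `v` is a minimizer of `w ↦ ½‖w - u‖² + α J(w)`, i.e. `v = prox_α^J(u)`
(the minimizer is unique by strict convexity). -/
def IsProxPt (J : H → EReal) (α : ℝ) (u v : H) : Prop :=
  ∀ w : H, ProxObj J α u v ≤ ProxObj J α u w

/-- The dual quantity `J_*(u) = sup { ⟪u,p⟫ / J(p) : p ∈ N(J)^⊥, J(p) > 0 }`. -/
def Jdual (J : H → EReal) (u : H) : EReal :=
  ⨆ p : {p : H // InNullPerp J p ∧ 0 < J p}, ((⟪u, (p : H)⟫ : ℝ) : EReal) / J (p : H)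

/-- `p` belongs to the subdifferential `∂J(u)`. -/
def InSubdiff (J : H → EReal) (u p : H) : Prop :=
  ∀ v : H, J u + ((⟪p, v - u⟫ : ℝ) : EReal) ≤ J v

variable {J : H → EReal}

lemma quad_zero (t A : ℝ) (hA : 0 ≤ A) (h : ∀ s : ℝ, 0 ≤ 2*s*t + s^2*A) : t = 0 := by
  have key := h (-(t/(A+1)))
  have hA1 : (0:ℝ) < A + 1 := by linarith
  have e : t = (t/(A+1))*(A+1) := by field_simp
  set u := t/(A+1) with hu
  rw [e] at key
  have key2 : u^2*(A+2) ≤ 0 := by nlinarith [key]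
  have hu2 : u^2 = 0 := le_antisymm (by nlinarith) (sq_nonneg u)
  have hu0 : u = 0 := sq_eq_zero_iff.mp hu2
  rw [e, hu0, zero_mul]

/-- J(v + s•n) ≤ J v when J n = 0 and J v = r real. -/
lemma J_add_null (hconv : ConvexFn J) (hhom : AbsOneHom J) {v n : H} {r : ℝ}
    (hr : J v = (r : EReal)) (hn : J n = 0) (s : ℝ) : J (v + s • n) ≤ (r : EReal) := by
  rcases eq_or_ne s 0 with h | h
  · simp [h, hr]
  have hcv := hconv ((2:ℝ) • v) ((2*s) • n) (1/2) (by norm_num) (by norm_num)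
  have he : (1/2:ℝ) • ((2:ℝ)•v) + ((1-1/2:ℝ)) • ((2*s)•n) = v + s • n := by module
  have h2v : J ((2:ℝ)•v) = ((2*r : ℝ) : EReal) := by
    rw [hhom.2 2 (by norm_num) v, hr]
    norm_num [← EReal.coe_mul]
  have h2n : J ((2*s)•n) = 0 := by
    rw [hhom.2 (2*s) (by simpa using h) n, hn, mul_zero]
  rw [he, h2v, h2n] at hcv
  refine hcv.trans_eq ?_
  rw [mul_zero, add_zero]
  norm_cast
  ring

/-- J v is a finite real when the prox point exists with J u real. -/
lemma prox_fin (hproper : ProperFn J) {α : ℝ} (hα : 0 < α) {u v : H}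
    (hprox : IsProxPt J α u v) {lam : ℝ} (hJu : J u = (lam : EReal)) :
    ∃ r : ℝ, J v = (r : EReal) := by
  have h := hprox u
  have hObju : ProxObj J α u u = (((2:ℝ)⁻¹ * ‖u - u‖^2 + α * lam : ℝ) : EReal) := by
    rw [ProxObj, hJu, ← EReal.coe_mul, ← EReal.coe_add]
  rw [hObju] at h
  rcases eq_or_ne (J v) ⊤ with ht | ht
  · exfalso
    rw [ProxObj, ht, EReal.coe_mul_top_of_pos (by exact_mod_cast hα),
      EReal.add_top_of_ne_bot (EReal.coe_ne_bot _)] at h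
    exact (EReal.coe_lt_top _).not_ge h
  · exact ⟨(J v).toReal, (EReal.coe_toReal ht (hproper.1 v)).symm⟩

/-- prox point stays perpendicular to null directions relative to u. -/
lemma prox_perp (hconv : ConvexFn J) (hhom : AbsOneHom J) {α : ℝ} (hα : 0 < α) {u v : H}
    (hprox : IsProxPt J α u v) {r : ℝ} (hJv : J v = (r : EReal)) :
    ∀ n : H, J n = 0 → ⟪v - u, n⟫ = 0 := by
  intro n hn
  have key : ∀ s : ℝ, 0 ≤ 2 * s * ⟪v - u, n⟫ + s^2 * ‖n‖^2 := by
    intro s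
    have h := hprox (v + s • n)
    have hJvs := J_add_null hconv hhom hJv hn s
    have h2 : ProxObj J α u v ≤ (((2:ℝ)⁻¹ * ‖v + s • n - u‖^2 + α * r : ℝ) : EReal) := by
      refine h.trans ?_
      rw [ProxObj, EReal.coe_add, EReal.coe_mul]
      exact add_le_add le_rfl (mul_le_mul_of_nonneg_left hJvs (by exact_mod_cast hα.le : (0:EReal) ≤ (α:EReal)))
    rw [ProxObj, hJv, ← EReal.coe_mul, ← EReal.coe_add, EReal.coe_le_coe_iff] at h2
    have hexp : ‖v + s • n - u‖^2 = ‖v - u‖^2 + 2 * s * ⟪v - u, n⟫ + s^2 * ‖n‖^2 := by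
      have : v + s • n - u = (v - u) + s • n := by abel
      rw [this, @norm_add_sq_real, inner_smul_right, norm_smul]
      simp [Real.norm_eq_abs, mul_pow, sq_abs]
      ring
    rw [hexp] at h2
    linarith
  have := quad_zero ⟪v - u, n⟫ (‖n‖^2) (by positivity) key
  exact this

set_option linter.unusedSectionVars false

lemma J_nonneg (hconv : ConvexFn J) (hhom : AbsOneHom J) (hproper : ProperFn J) (u : H) :
    0 ≤ J u := by
  rcases eq_or_ne (J u) ⊤ with h | h
  · rw [h]; exact le_top
  obtain ⟨r, hr⟩ : ∃ r : ℝ, J u = (r : EReal) :=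
    ⟨(J u).toReal, (EReal.coe_toReal h (hproper.1 u)).symm⟩
  have hneg : J (-u) = J u := by
    have h2 := hhom.2 (-1) (by norm_num) u
    simpa using h2
  have hcv := hconv u (-u) (1/2) (by norm_num) (by norm_num)
  have he : (1/2 : ℝ) • u + ((1 - 1/2 : ℝ)) • (-u) = (0 : H) := by module
  rw [he, hhom.1, hneg, hr] at hcv
  rw [hr]
  norm_cast at hcv ⊢
  linarith

lemma prox_ne_zero (hhom : AbsOneHom J) {α : ℝ} (hα : 0 < α) {u v : H}
    (hlt : (α : EReal) < Jdual J u) (hprox : IsProxPt J α u v) : v ≠ 0 := by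
  rw [Jdual, lt_iSup_iff] at hlt
  obtain ⟨⟨p, hperp, hpos⟩, hgt⟩ := hlt
  change (α : EReal) < ((⟪u, p⟫ : ℝ) : EReal) / J p at hgt
  rcases eq_or_ne (J p) ⊤ with ht | ht
  · exfalso
    rw [ht, EReal.div_top] at hgt
    have : α < 0 := by exact_mod_cast hgt
    linarith
  obtain ⟨r, hr⟩ : ∃ r : ℝ, J p = (r : EReal) :=
    ⟨(J p).toReal, (EReal.coe_toReal ht (ne_bot_of_gt hpos)).symm⟩
  have hrpos : 0 < r := by rw [hr] at hpos; exact_mod_cast hpos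
  rw [hr, ← EReal.coe_div] at hgt
  have hgt' : α < ⟪u, p⟫ / r := by exact_mod_cast hgt
  have hδ : 0 < ⟪u, p⟫ - α * r := by
    have := (lt_div_iff₀ hrpos).mp hgt'
    linarith
  intro hv0
  set A := ‖p‖^2 with hA
  have hAnn : (0:ℝ) ≤ A := by positivity
  set δ := ⟪u, p⟫ - α * r with hδdef
  set t := δ / (A + 1) with htdef
  have ht : 0 < t := div_pos hδ (by linarith)
  have h := hprox (t • p)
  have hJt : J (t • p) = ((t * r : ℝ) : EReal) := by
    rw [hhom.2 t (ne_of_gt ht) p, hr, abs_of_pos ht, EReal.coe_mul]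
  have hObj0 : ProxObj J α u v = (((2:ℝ)⁻¹ * ‖u‖^2 : ℝ) : EReal) := by
    rw [ProxObj, hv0, hhom.1, mul_zero, add_zero, zero_sub, norm_neg]
  have hObjt : ProxObj J α u (t • p) =
      (((2:ℝ)⁻¹ * ‖t • p - u‖^2 + α * (t * r) : ℝ) : EReal) := by
    rw [ProxObj, hJt, ← EReal.coe_mul, ← EReal.coe_add]
  rw [hObj0, hObjt, EReal.coe_le_coe_iff] at h
  have hexp : ‖t • p - u‖^2 = t^2 * A - 2 * t * ⟪u, p⟫ + ‖u‖^2 := by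
    rw [@norm_sub_sq_real, inner_smul_left, norm_smul]
    simp [Real.norm_eq_abs, mul_pow, sq_abs, real_inner_comm]
    ring
  rw [hexp] at h
  -- h : 2⁻¹‖u‖² ≤ 2⁻¹(t²A − 2t⟪u,p⟫ + ‖u‖²) + α t r
  have htA : t * (A + 1) = δ := by
    rw [htdef]; field_simp
  nlinarith [h, htA, mul_pos ht ht, sq_nonneg t, ht, hAnn]

lemma key_ineq (hhom : AbsOneHom J) {α : ℝ} (hα : 0 < α) {u v : H} (hu : ‖u‖ = 1)
    (hprox : IsProxPt J α u v) {lam mu : ℝ} (hJu : J u = (lam : EReal))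
    (hJv : J v = ((‖v‖ * mu : ℝ) : EReal)) (hv0 : v ≠ 0) :
    ‖v‖ - ⟪v, u⟫ ≤ α * ‖v‖ * (lam - mu) := by
  have h := hprox (‖v‖ • u)
  have hJw : J (‖v‖ • u) = ((‖v‖ * lam : ℝ) : EReal) := by
    rw [hhom.2 ‖v‖ (norm_ne_zero_iff.2 hv0) u, hJu, abs_of_nonneg (norm_nonneg v),
      EReal.coe_mul]
  rw [ProxObj, ProxObj, hJv, hJw, ← EReal.coe_mul, ← EReal.coe_mul, ← EReal.coe_add,
    ← EReal.coe_add, EReal.coe_le_coe_iff] at h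
  have hnorm1 : ‖v - u‖^2 = ‖v‖^2 - 2*⟪v,u⟫ + 1 := by
    rw [@norm_sub_sq_real, hu]; ring
  have hnorm2 : ‖‖v‖ • u - u‖^2 = (‖v‖-1)^2 := by
    have e : ‖v‖ • u - u = (‖v‖ - 1) • u := by
      rw [sub_smul, one_smul]
    rw [e, norm_smul, hu, mul_one, Real.norm_eq_abs, sq_abs]
  rw [hnorm1, hnorm2] at h
  nlinarith [h]


set_option maxHeartbeats 1000000 in
/-- **Rate of asymptotic collinearity of the proximal power method.**
Let `J` be proper, convex, lsc, absolutely one-homogeneous, satisfying a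
Poincaré inequality `c_P ‖u‖ ≤ J(u)` on `N(J)^⊥`. Let `(u^k), (v^k)` be
generated by the proximal power method starting from `f ∈ N(J)^⊥ \ {0}` with
parameters `0 < α(u^k) ≤ c / J(u^k)` (`c ∈ (0,1)`) and `α(u^k) < J_*(u^k)`, and
assume `sup_k ‖v^k‖ < ∞`. Then the nonnegative terms `‖v^k‖ - ⟪v^k, u^k⟫` are
summable; in particular they tend to `0`. -/
theorem collinearity_rate_of_proximal_power_method
    (J : H → EReal) (hproper : ProperFn J) (hconv : ConvexFn J)
    (hlsc : LowerSemicontinuous J) (hhom : AbsOneHom J)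
    (cP : ℝ) (hcP : 0 < cP)
    (hpoincare : ∀ u : H, InNullPerp J u → ((cP * ‖u‖ : ℝ) : EReal) ≤ J u)
    (f : H) (hf : InNullPerp J f) (hf0 : f ≠ 0)
    (c : ℝ) (hc0 : 0 < c) (hc1 : c < 1)
    (useq vseq : ℕ → H) (αseq : ℕ → ℝ)
    (hinit : useq 0 = ‖f‖⁻¹ • f)
    (hαpos : ∀ k, 0 < αseq k)
    (hαle : ∀ k, (αseq k : EReal) ≤ (c : EReal) / J (useq k))
    (hαlt : ∀ k, (αseq k : EReal) < Jdual J (useq k))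
    (hv : ∀ k, IsProxPt J (αseq k) (useq k) (vseq k))
    (hstep : ∀ k, useq (k + 1) = ‖vseq k‖⁻¹ • vseq k)
    (hbdd : ∃ M : ℝ, ∀ k, ‖vseq k‖ ≤ M) :
    (∀ k, 0 ≤ ‖vseq k‖ - ⟪vseq k, useq k⟫) ∧
    Summable (fun k => ‖vseq k‖ - ⟪vseq k, useq k⟫) ∧
    Filter.Tendsto (fun k => ‖vseq k‖ - ⟪vseq k, useq k⟫) Filter.atTop (nhds 0) := by
  obtain ⟨M, hM⟩ := hbdd
  -- J(useq k) is finite real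
  have hfin : ∀ k, ∃ lam : ℝ, J (useq k) = (lam : EReal) := by
    intro k
    rcases eq_or_ne (J (useq k)) ⊤ with ht | ht
    · exfalso
      have h := hαle k
      rw [ht, EReal.div_top] at h
      have : αseq k ≤ 0 := by exact_mod_cast h
      linarith [hαpos k]
    · exact ⟨(J (useq k)).toReal, (EReal.coe_toReal ht (hproper.1 _)).symm⟩
  choose lam hlam using hfin
  -- v^k ≠ 0
  have hvne : ∀ k, vseq k ≠ 0 := fun k => prox_ne_zero hhom (hαpos k) (hαlt k) (hv k)
  have hvnorm : ∀ k, 0 < ‖vseq k‖ := fun k => norm_pos_iff.2 (hvne k)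
  -- invariant: unit norm and null-perp
  have hinv : ∀ k, ‖useq k‖ = 1 ∧ InNullPerp J (useq k) := by
    intro k
    induction k with
    | zero =>
      rw [hinit]
      constructor
      · rw [norm_smul, Real.norm_eq_abs, abs_of_pos (inv_pos.2 (norm_pos_iff.2 hf0)),
          inv_mul_cancel₀ (norm_ne_zero_iff.2 hf0)]
      · intro n hn
        rw [real_inner_smul_left, hf n hn, mul_zero]
    | succ k ih =>
      have hvperp : ∀ n : H, J n = 0 → ⟪vseq k, n⟫ = 0 := by
        intro n hn
        obtain ⟨r, hr⟩ := prox_fin hproper (hαpos k) (hv k) (hlam k)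
        have h1 := prox_perp hconv hhom (hαpos k) (hv k) hr n hn
        have h2 := ih.2 n hn
        rw [inner_sub_left] at h1
        linarith
      constructor
      · rw [hstep k, norm_smul, Real.norm_eq_abs, abs_of_pos (inv_pos.2 (hvnorm k)),
          inv_mul_cancel₀ (ne_of_gt (hvnorm k))]
      · intro n hn
        rw [hstep k, real_inner_smul_left, hvperp n hn, mul_zero]
  -- lam k ≥ cP
  have hlam_ge : ∀ k, cP ≤ lam k := by
    intro k
    have h := hpoincare (useq k) (hinv k).2
    rw [(hinv k).1, mul_one, hlam k] at h
    exact_mod_cast h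
  have hlam_pos : ∀ k, 0 < lam k := fun k => lt_of_lt_of_le hcP (hlam_ge k)
  -- α_k ≤ c / lam k
  have hαlam : ∀ k, αseq k ≤ c / lam k := by
    intro k
    have h := hαle k
    rw [hlam k, ← EReal.coe_div] at h
    exact_mod_cast h
  -- J(v^k) = ‖v^k‖ * lam (k+1)
  have hJv : ∀ k, J (vseq k) = ((‖vseq k‖ * lam (k+1) : ℝ) : EReal) := by
    intro k
    have hvk : vseq k = ‖vseq k‖ • useq (k+1) := by
      rw [hstep k, smul_smul, mul_inv_cancel₀ (ne_of_gt (hvnorm k)), one_smul]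
    calc J (vseq k) = J (‖vseq k‖ • useq (k+1)) := by rw [← hvk]
      _ = ((|‖vseq k‖| : ℝ) : EReal) * J (useq (k+1)) :=
          hhom.2 _ (ne_of_gt (hvnorm k)) _
      _ = ((‖vseq k‖ * lam (k+1) : ℝ) : EReal) := by
          rw [hlam (k+1), abs_of_pos (hvnorm k), EReal.coe_mul]
  -- key inequality per step
  have hkey : ∀ k, ‖vseq k‖ - ⟪vseq k, useq k⟫ ≤
      αseq k * ‖vseq k‖ * (lam k - lam (k+1)) := fun k =>
    key_ineq hhom (hαpos k) (hinv k).1 (hv k) (hlam k) (hJv k) (hvne k)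
  -- nonnegativity
  have ha_nonneg : ∀ k, 0 ≤ ‖vseq k‖ - ⟪vseq k, useq k⟫ := by
    intro k
    have h := real_inner_le_norm (vseq k) (useq k)
    rw [(hinv k).1, mul_one] at h
    linarith
  -- lam is monotone decreasing
  have hlam_mono : ∀ k, lam (k+1) ≤ lam k := by
    intro k
    by_contra hcon
    push_neg at hcon
    have h1 := (ha_nonneg k).trans (hkey k)
    nlinarith [mul_pos (hαpos k) (hvnorm k)]
  -- the uniform constant
  have hM0 : 0 ≤ M := le_trans (norm_nonneg (vseq 0)) (hM 0)
  set C := (c / cP) * M with hC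
  have hCnn : 0 ≤ C := by positivity
  have hbound : ∀ k, ‖vseq k‖ - ⟪vseq k, useq k⟫ ≤ C * (lam k - lam (k+1)) := by
    intro k
    refine (hkey k).trans ?_
    have h1 : αseq k ≤ c / cP := by
      refine (hαlam k).trans ?_
      exact div_le_div_of_nonneg_left hc0.le hcP (hlam_ge k)
    have h2 : αseq k * ‖vseq k‖ ≤ (c / cP) * M :=
      mul_le_mul h1 (hM k) (norm_nonneg _) (by positivity)
    have h3 : 0 ≤ lam k - lam (k+1) := by linarith [hlam_mono k]
    exact mul_le_mul_of_nonneg_right h2 h3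
  have hsum_le : ∀ n, ∑ i ∈ Finset.range n, (‖vseq i‖ - ⟪vseq i, useq i⟫) ≤ C * lam 0 := by
    intro n
    calc ∑ i ∈ Finset.range n, (‖vseq i‖ - ⟪vseq i, useq i⟫)
        ≤ ∑ i ∈ Finset.range n, C * (lam i - lam (i+1)) :=
          Finset.sum_le_sum (fun i _ => hbound i)
      _ = C * (lam 0 - lam n) := by rw [← Finset.mul_sum, Finset.sum_range_sub']
      _ ≤ C * lam 0 := by nlinarith [hlam_pos n, hCnn]
  have hsummable : Summable (fun k => ‖vseq k‖ - ⟪vseq k, useq k⟫) :=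
    summable_of_sum_range_le ha_nonneg hsum_le
  exact ⟨ha_nonneg, hsummable, hsummable.tendsto_atTop_zero⟩

end
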